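/- Let A be a ring of characteristic p, R an A-algebra, and M, N two R-modules. The map Θ : F^e_* M ⊗_A F^e_* N → F^e_*(M ⊗_A N) defined by F^e_* m ⊗_A F^e_* n ↦ F^e_*(m ⊗_A n) is a well-defined surjective homomorphism of R ⊗_A R-modules, and its kernel is the submodule generated by all elements F^e_*(a m) ⊗_A F^e_* n - F^e_* m ⊗_A F^e_*(a n) with a ∈ A, m ∈ M, n ∈ N. -/

import Mathlib

open TensorProduct

/-- `FStar p e M` is the abelian group `M` viewed as a module via restriction of
scalars along the `e`-th iterate of the Frobenius `x ↦ x^{p^e}`, i.e. `F^e_* M`. -/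
def FStar (_p _e : ℕ) (M : Type*) : Type _ := M

/-- The identification of `M` with `F^e_* M` as sets. -/
def FStar.of (p e : ℕ) {M : Type*} (m : M) : FStar p e M := m

instance (p e : ℕ) {M : Type*} [AddCommGroup M] : AddCommGroup (FStar p e M) :=
  inferInstanceAs (AddCommGroup M)

/-- The twisted module structure: `a • (F^e_* m) = F^e_* (a^{p^e} • m)`. -/
noncomputable instance (p e : ℕ) {A M : Type*} [CommRing A] [Fact p.Prime] [CharP A p]
    [AddCommGroup M] [Module A M] : Module A (FStar p e M) :=
  letI : ExpChar A p := ExpChar.prime Fact.out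
  Module.compHom M (iterateFrobenius A p e)

/-- Explicit downcast, inverse to `FStar.of`. -/
def FStar.dn (p e : ℕ) {M : Type*} (m : FStar p e M) : M := m

section aux

variable (p e : ℕ) [Fact p.Prime] {A : Type*} [CommRing A] [CharP A p]
  {M N : Type*} [AddCommGroup M] [Module A M] [AddCommGroup N] [Module A N]

lemma fstar_dn_smul (a : A) (x : FStar p e M) :
    FStar.dn p e (a • x) = (a ^ p ^ e) • FStar.dn p e x := by
  letI : ExpChar A p := ExpChar.prime Fact.out
  show iterateFrobenius A p e a • FStar.dn p e x = _
  rw [iterateFrobenius_def]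

lemma fstar_smul (a : A) (x : FStar p e M) :
    a • x = FStar.of p e ((a ^ p ^ e) • FStar.dn p e x) := fstar_dn_smul p e a x

lemma fstar_smul' {P : Type*} [AddCommGroup P] [Module A P] (a : A) (x : FStar p e P) :
    a • x = FStar.of p e ((a ^ p ^ e) • FStar.dn p e x) := fstar_dn_smul p e a x

noncomputable def theta0 : FStar p e M ⊗[A] FStar p e N →+ M ⊗[A] N :=
  TensorProduct.liftAddHom
    (AddMonoidHom.mk'
      (fun m => AddMonoidHom.mk'
        (fun n => FStar.dn p e m ⊗ₜ[A] FStar.dn p e n)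
        (fun n₁ n₂ => by
          show FStar.dn p e m ⊗ₜ[A] (FStar.dn p e n₁ + FStar.dn p e n₂)
            = FStar.dn p e m ⊗ₜ[A] FStar.dn p e n₁ + FStar.dn p e m ⊗ₜ[A] FStar.dn p e n₂
          rw [tmul_add]))
      (fun m₁ m₂ => by
        ext n
        show (FStar.dn p e m₁ + FStar.dn p e m₂) ⊗ₜ[A] FStar.dn p e n
          = FStar.dn p e m₁ ⊗ₜ[A] FStar.dn p e n + FStar.dn p e m₂ ⊗ₜ[A] FStar.dn p e n
        rw [add_tmul]))
    (fun a m n => by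
      show FStar.dn p e (a • m) ⊗ₜ[A] FStar.dn p e n
        = FStar.dn p e m ⊗ₜ[A] FStar.dn p e (a • n)
      rw [fstar_dn_smul, fstar_dn_smul]
      exact smul_tmul _ _ _)

lemma theta0_tmul (m : FStar p e M) (n : FStar p e N) :
    theta0 p e (m ⊗ₜ[A] n) = FStar.dn p e m ⊗ₜ[A] FStar.dn p e n :=
  TensorProduct.liftAddHom_tmul _ _ _ _

lemma fstar_smul'' (a : A) (x : FStar p e (M ⊗[A] N)) :
    a • x = FStar.of p e ((a ^ p ^ e) • FStar.dn p e x) := fstar_dn_smul p e a x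

noncomputable def theta : FStar p e M ⊗[A] FStar p e N →ₗ[A] FStar p e (M ⊗[A] N) where
  toFun := theta0 p e
  map_add' := (theta0 p e).map_add
  map_smul' a z := by
    simp only [RingHom.id_apply]
    induction z using TensorProduct.induction_on with
    | zero => rw [smul_zero, map_zero]; exact ((fstar_smul'' p e a 0).trans (smul_zero (a ^ p ^ e) : (a ^ p ^ e) • (0 : M ⊗[A] N) = 0)).symm
    | tmul m n =>
        rw [smul_tmul', theta0_tmul, theta0_tmul, fstar_dn_smul]
        exact (smul_tmul' _ _ _).symm.trans (fstar_smul'' p e a _).symm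
    | add x y hx hy =>
        rw [smul_add, map_add, map_add, hx, hy]; exact (smul_add a _ _).symm

lemma theta_tmul (m : FStar p e M) (n : FStar p e N) :
    theta p e (m ⊗ₜ[A] n) = theta0 p e (m ⊗ₜ[A] n) := rfl

end aux

theorem stmt_15 (p e : ℕ) [Fact p.Prime]
    (A R M N : Type*) [CommRing A] [CharP A p] [CommRing R] [Algebra A R]
    [AddCommGroup M] [Module A M] [AddCommGroup N] [Module A N]
    [Module R M] [Module R N] [IsScalarTower A R M] [IsScalarTower A R N] :
    ∃ Θ : FStar p e M ⊗[A] FStar p e N →ₗ[A] FStar p e (M ⊗[A] N),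
      (∀ (m : M) (n : N),
        Θ (FStar.of p e m ⊗ₜ[A] FStar.of p e n) = FStar.of p e (m ⊗ₜ[A] n)) ∧
      Function.Surjective Θ ∧
      LinearMap.ker Θ = Submodule.span A
        { z : FStar p e M ⊗[A] FStar p e N | ∃ (a : A) (m : M) (n : N),
          z = FStar.of p e (a • m) ⊗ₜ[A] FStar.of p e n
            - FStar.of p e m ⊗ₜ[A] FStar.of p e (a • n) } := by
  refine ⟨theta p e, fun m n => theta0_tmul p e _ _, ?_, ?_⟩
  · -- surjectivity
    have key : ∀ w : M ⊗[A] N, ∃ x, theta p e x = FStar.of p e w := by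
      intro w
      induction w using TensorProduct.induction_on with
      | zero => exact ⟨0, map_zero _⟩
      | tmul m n => exact ⟨FStar.of p e m ⊗ₜ[A] FStar.of p e n, theta0_tmul p e _ _⟩
      | add x y hx hy =>
          obtain ⟨x', hx'⟩ := hx
          obtain ⟨y', hy'⟩ := hy
          exact ⟨x' + y', by rw [map_add, hx', hy']; rfl⟩
    intro y
    exact key (FStar.dn p e y)
  · set S := Submodule.span A
        { z : FStar p e M ⊗[A] FStar p e N | ∃ (a : A) (m : M) (n : N),
          z = FStar.of p e (a • m) ⊗ₜ[A] FStar.of p e n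
            - FStar.of p e m ⊗ₜ[A] FStar.of p e (a • n) } with hS
    apply le_antisymm
    · -- ker ≤ S
      set g : M ⊗[A] N →+ ((FStar p e M ⊗[A] FStar p e N) ⧸ S) :=
        TensorProduct.liftAddHom
          (AddMonoidHom.mk'
            (fun m => AddMonoidHom.mk'
              (fun n => Submodule.Quotient.mk (FStar.of p e m ⊗ₜ[A] FStar.of p e n))
              (fun n₁ n₂ => by
                show Submodule.Quotient.mk
                    (FStar.of p e m ⊗ₜ[A] (FStar.of p e n₁ + FStar.of p e n₂)) = _
                rw [tmul_add, Submodule.Quotient.mk_add]))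
            (fun m₁ m₂ => by
              ext n
              show Submodule.Quotient.mk
                  ((FStar.of p e m₁ + FStar.of p e m₂) ⊗ₜ[A] FStar.of p e n) = _
              rw [add_tmul, Submodule.Quotient.mk_add]
              rfl))
          (fun a m n => by
            show Submodule.Quotient.mk (FStar.of p e (a • m) ⊗ₜ[A] FStar.of p e n)
              = Submodule.Quotient.mk (FStar.of p e m ⊗ₜ[A] FStar.of p e (a • n))
            rw [Submodule.Quotient.eq]
            exact Submodule.subset_span ⟨a, m, n, rfl⟩) with hg
      have hgθ : ∀ z : FStar p e M ⊗[A] FStar p e N,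
          g (theta p e z) = Submodule.Quotient.mk z := by
        intro z
        induction z using TensorProduct.induction_on with
        | zero => rw [map_zero]; exact (map_zero g).trans rfl
        | tmul m n =>
            rw [theta_tmul, theta0_tmul]
            exact TensorProduct.liftAddHom_tmul _ _ _ _
        | add x y hx hy =>
            rw [map_add]
            exact (map_add g _ _).trans (by rw [hx, hy, Submodule.Quotient.mk_add])
      intro z hz
      have h0 : Submodule.Quotient.mk z = (0 : (FStar p e M ⊗[A] FStar p e N) ⧸ S) := by
        rw [← hgθ z, LinearMap.mem_ker.mp hz]; exact map_zero g
      exact (Submodule.Quotient.mk_eq_zero S).mp h0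
    · -- S ≤ ker
      rw [hS, Submodule.span_le]
      rintro z ⟨a, m, n, rfl⟩
      simp only [SetLike.mem_coe, LinearMap.mem_ker, map_sub]
      rw [theta_tmul, theta_tmul, theta0_tmul, theta0_tmul]
      show (a • m) ⊗ₜ[A] n - m ⊗ₜ[A] (a • n) = (0 : M ⊗[A] N)
      rw [smul_tmul, sub_self]
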